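/- Let E be a finite-dimensional real inner product space, let φ : E → ℝ be convex and continuously differentiable with L-Lipschitz continuous gradient, and let T : E → E be quasi-nonexpansive with fix(T) nonempty and bounded. Let C ⊆ E be a nonempty bounded closed convex set on which T is quasi-shrinking, and let Ω* := {ω* ∈ fix(T) : ⟨ω − ω*, ∇φ(ω*)⟩ ≥ 0 for all ω ∈ fix(T)} be nonempty. Let (β_k)_{k∈ℕ} be positive step sizes with β_k → 0 and ∑_k β_k = ∞, and let (ω^k) be generated by the hybrid steepest descent iteration ω^{k+1} = T(ω^k) − β_k ∇φ(T(ω^k)). If ω^k ∈ C for all k, then dist(ω^k, Ω*) → 0 as k → ∞. -/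

import Mathlib

open Metric Filter Topology
open scoped RealInnerProductSpace

variable {E : Type*} [NormedAddCommGroup E] [InnerProductSpace ℝ E] [FiniteDimensional ℝ E]

/-- The fixed-point set of an operator. -/
def fixSet (T : E → E) : Set E := {x | T x = x}

/-- The shrinkage function of `T` on `C`. -/
noncomputable def shrinkage (T : E → E) (C : Set E) (r : ℝ) : EReal :=
  ⨅ x ∈ {y ∈ C | r ≤ Metric.infDist y (fixSet T)},
    ((Metric.infDist x (fixSet T) - Metric.infDist (T x) (fixSet T) : ℝ) : EReal)

set_option linter.unusedSectionVars false

lemma hsdm_lineMap_hasDerivAt (x v : E) (t : ℝ) :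
    HasDerivAt (fun s : ℝ => s • v + x) v t := by
  simpa using ((hasDerivAt_id t).smul_const v).add_const x

lemma hsdm_comp_hasDerivAt (φ : E → ℝ) (f' : E → E)
    (hgrad : ∀ x : E, HasGradientAt φ (f' x) x) (x v : E) (t : ℝ) :
    HasDerivAt (fun s : ℝ => φ (s • v + x)) ⟪f' (t • v + x), v⟫ t := by
  have h1 := (hgrad (t • v + x)).hasFDerivAt
  have h2 := h1.comp_hasDerivAt t (hsdm_lineMap_hasDerivAt x v t)
  simpa [Function.comp_def, InnerProductSpace.toDual_apply_apply] using h2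

lemma hsdm_comp_convexOn (φ : E → ℝ) (hconv : ConvexOn ℝ Set.univ φ) (x v : E) :
    ConvexOn ℝ Set.univ (fun s : ℝ => φ (s • v + x)) := by
  have h := hconv.comp_affineMap (AffineMap.lineMap x (x + v) : ℝ →ᵃ[ℝ] E)
  have heq : (fun s : ℝ => φ (s • v + x)) = φ ∘ ⇑(AffineMap.lineMap x (x + v)) := by
    funext s
    simp [AffineMap.lineMap_apply, vsub_eq_sub, vadd_eq_add, add_sub_cancel_left]
  rw [heq]
  simpa using h

lemma hsdm_grad_inner_le (φ : E → ℝ) (f' : E → E) (hconv : ConvexOn ℝ Set.univ φ)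
    (hgrad : ∀ x : E, HasGradientAt φ (f' x) x) (x y : E) :
    φ x + ⟪f' x, y - x⟫ ≤ φ y := by
  have hg := hsdm_comp_hasDerivAt φ f' hgrad x (y - x) 0
  simp only [zero_smul, zero_add] at hg
  have hslope := (hsdm_comp_convexOn φ hconv x (y - x)).le_slope_of_hasDerivAt
    (Set.mem_univ (0:ℝ)) (Set.mem_univ (1:ℝ)) one_pos hg
  rw [slope_def_field] at hslope
  simp only [one_smul, zero_smul, zero_add, sub_zero, div_one, sub_add_cancel] at hslope
  linarith

lemma hsdm_vi_of_min (φ : E → ℝ) (f' : E → E)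
    (hgrad : ∀ x : E, HasGradientAt φ (f' x) x)
    {F : Set E} (hFcv : Convex ℝ F) {x : E} (hx : x ∈ F)
    (hmin : ∀ w ∈ F, φ x ≤ φ w) (w : E) (hw : w ∈ F) :
    0 ≤ ⟪f' x, w - x⟫ := by
  have hg := hsdm_comp_hasDerivAt φ f' hgrad x (w - x) 0
  simp only [zero_smul, zero_add] at hg
  have hkey : ∀ t ∈ Set.Ioc (0:ℝ) 1, 0 ≤ slope (fun s : ℝ => φ (s • (w - x) + x)) 0 t := by
    intro t ht
    have hmemF : t • (w - x) + x ∈ F := by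
      have h := hFcv hx hw (by linarith [ht.2] : (0:ℝ) ≤ 1 - t) ht.1.le (by ring)
      convert h using 1
      module
    have h2 := hmin _ hmemF
    rw [slope_def_field]
    simp only [zero_smul, zero_add, sub_zero]
    exact div_nonneg (by linarith) ht.1.le
  have h2 : Tendsto (slope (fun s : ℝ => φ (s • (w - x) + x)) 0) (𝓝[>] (0:ℝ))
      (𝓝 ⟪f' x, w - x⟫) :=
    (hasDerivAt_iff_tendsto_slope.1 hg).mono_left
      (nhdsWithin_mono 0 fun y hy => ne_of_gt hy)
  exact ge_of_tendsto h2 (Filter.mem_of_superset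
    (Ioc_mem_nhdsGT_of_mem ⟨le_rfl, one_pos⟩) hkey)

lemma hsdm_fixSet_eq (T : E → E)
    (hqne : ∀ z ∈ fixSet T, ∀ x : E, ‖T x - z‖ ≤ ‖x - z‖) :
    fixSet T = ⋂ x : E, {z : E | ‖T x - z‖ ≤ ‖x - z‖} := by
  ext z
  simp only [Set.mem_iInter, Set.mem_setOf_eq]
  constructor
  · intro hz x; exact hqne z hz x
  · intro h
    have h1 : ‖T z - z‖ ≤ 0 := by simpa using h z
    exact sub_eq_zero.1 (norm_le_zero_iff.1 h1)

lemma hsdm_halfspace_convex (a b : E) : Convex ℝ {z : E | ‖a - z‖ ≤ ‖b - z‖} := by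
  have hset : {z : E | ‖a - z‖ ≤ ‖b - z‖} = {z : E | 2 * ⟪b - a, z⟫ ≤ ‖b‖^2 - ‖a‖^2} := by
    ext z
    simp only [Set.mem_setOf_eq]
    have e1 := norm_sub_sq_real a z
    have e2 := norm_sub_sq_real b z
    have e3 : ⟪b - a, z⟫ = ⟪b, z⟫ - ⟪a, z⟫ := inner_sub_left b a z
    constructor
    · intro h
      have hsq : ‖a - z‖^2 ≤ ‖b - z‖^2 := by nlinarith [norm_nonneg (a - z), norm_nonneg (b - z)]
      linarith
    · intro h
      have hsq : ‖a - z‖^2 ≤ ‖b - z‖^2 := by linarith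
      nlinarith [norm_nonneg (a - z), norm_nonneg (b - z)]
  rw [hset]
  exact convex_halfSpace_le
    ⟨fun u v => by rw [inner_add_right]; ring, fun c u => by rw [real_inner_smul_right, smul_eq_mul]; ring⟩ _

lemma hsdm_fixSet_closed (T : E → E)
    (hqne : ∀ z ∈ fixSet T, ∀ x : E, ‖T x - z‖ ≤ ‖x - z‖) : IsClosed (fixSet T) := by
  rw [hsdm_fixSet_eq T hqne]
  exact isClosed_iInter fun x => isClosed_le
    ((continuous_const.sub continuous_id).norm) ((continuous_const.sub continuous_id).norm)

lemma hsdm_fixSet_convex (T : E → E)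
    (hqne : ∀ z ∈ fixSet T, ∀ x : E, ‖T x - z‖ ≤ ‖x - z‖) : Convex ℝ (fixSet T) := by
  rw [hsdm_fixSet_eq T hqne]
  exact convex_iInter fun x => hsdm_halfspace_convex (T x) x
set_option maxHeartbeats 1000000 in
/-- Lemma 2 (Yamada–Ogura): convergence of the hybrid steepest descent method.
If `T` is quasi-nonexpansive with nonempty bounded fixed-point set, quasi-shrinking on a
nonempty bounded closed convex set `C`, `φ` is convex with `L`-Lipschitz gradient `f'`,
the step sizes are positive, vanishing and non-summable, and the HSDM iterates all stay
in `C`, then the distance of the iterates to the solution set `Ω*` of the variational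
inequality over `fix T` tends to `0`. -/
theorem hsdm_dist_tendsto_zero
    (φ : E → ℝ) (f' : E → E) (L : ℝ) (hL : 0 ≤ L)
    (hconv : ConvexOn ℝ Set.univ φ)
    (hgrad : ∀ x : E, HasGradientAt φ (f' x) x)
    (hlip : ∀ x y : E, ‖f' x - f' y‖ ≤ L * ‖x - y‖)
    (T : E → E)
    (hfixne : (fixSet T).Nonempty)
    (hfixbdd : Bornology.IsBounded (fixSet T))
    (hqne : ∀ z ∈ fixSet T, ∀ x : E, ‖T x - z‖ ≤ ‖x - z‖)
    (C : Set E) (hCne : C.Nonempty) (hCbdd : Bornology.IsBounded C)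
    (hCcl : IsClosed C) (hCcv : Convex ℝ C)
    (hmeet : (fixSet T ∩ C).Nonempty)
    (hshrink : ∀ r : ℝ, 0 ≤ r → (shrinkage T C r = 0 ↔ r = 0))
    (Ωs : Set E)
    (hΩs : Ωs = {z ∈ fixSet T | ∀ ω ∈ fixSet T, 0 ≤ ⟪ω - z, f' z⟫})
    (hΩsne : Ωs.Nonempty)
    (β : ℕ → ℝ) (hβpos : ∀ k, 0 < β k)
    (hβ0 : Tendsto β atTop (𝓝 (0 : ℝ)))
    (hβsum : Tendsto (fun N => ∑ k ∈ Finset.range N, β k) atTop atTop)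
    (ω : ℕ → E)
    (hrec : ∀ k : ℕ, ω (k + 1) = T (ω k) - β k • f' (T (ω k)))
    (hmem : ∀ k : ℕ, ω k ∈ C) :
    Tendsto (fun k => Metric.infDist (ω k) Ωs) atTop (𝓝 (0 : ℝ)) := by
  -- Basic facts about the fixed-point set
  have hFscl : IsClosed (fixSet T) := hsdm_fixSet_closed T hqne
  have hFscv : Convex ℝ (fixSet T) := hsdm_fixSet_convex T hqne
  have hFscpt : IsCompact (fixSet T) := isCompact_of_isClosed_isBounded hFscl hfixbdd
  obtain ⟨z₀, hz₀F, hz₀C⟩ := hmeet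
  obtain ⟨ρ, hρ⟩ := hCbdd.subset_closedBall z₀
  have hρ0 : 0 ≤ ρ := by
    have h := hρ hz₀C
    rw [mem_closedBall, dist_self] at h
    exact h
  have hTC : ∀ x ∈ C, T x ∈ closedBall z₀ ρ := by
    intro x hx
    have h1 : ‖T x - z₀‖ ≤ ‖x - z₀‖ := hqne z₀ hz₀F x
    have h2 : dist x z₀ ≤ ρ := hρ hx
    rw [mem_closedBall, dist_eq_norm]
    rw [dist_eq_norm] at h2
    exact h1.trans h2
  obtain ⟨M, hM0, hfM⟩ : ∃ M : ℝ, 0 < M ∧ ∀ u ∈ closedBall z₀ ρ, ‖f' u‖ ≤ M := by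
    refine ⟨L * ρ + ‖f' z₀‖ + 1, by positivity, fun u hu => ?_⟩
    have h1 := hlip u z₀
    have h2 : ‖u - z₀‖ ≤ ρ := by rwa [mem_closedBall, dist_eq_norm] at hu
    have h3 : ‖f' u‖ - ‖f' z₀‖ ≤ ‖f' u - f' z₀‖ := norm_sub_norm_le _ _
    have h4 : L * ‖u - z₀‖ ≤ L * ρ := mul_le_mul_of_nonneg_left h2 hL
    linarith
  -- distance to fixed set does not increase under T
  have hdT : ∀ x : E, infDist (T x) (fixSet T) ≤ infDist x (fixSet T) := by
    intro x
    obtain ⟨z, hz, hzd⟩ := hFscpt.exists_infDist_eq_dist hfixne x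
    calc infDist (T x) (fixSet T) ≤ dist (T x) z := infDist_le_dist_of_mem hz
      _ ≤ dist x z := by rw [dist_eq_norm, dist_eq_norm]; exact hqne z hz x
      _ = infDist x (fixSet T) := hzd.symm
  -- usable form of the quasi-shrinking property
  have hD : ∀ ε : ℝ, 0 < ε → ∃ δ : ℝ, 0 < δ ∧ ∀ x ∈ C, ε ≤ infDist x (fixSet T) →
      δ ≤ infDist x (fixSet T) - infDist (T x) (fixSet T) := by
    intro ε hε
    have h0le : (0 : EReal) ≤ shrinkage T C ε := by
      rw [shrinkage]
      refine le_iInf₂ fun x hx => ?_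
      exact_mod_cast sub_nonneg.2 (hdT x)
    have hne : shrinkage T C ε ≠ 0 := fun h => absurd ((hshrink ε hε.le).1 h) hε.ne'
    have hpos : (0 : EReal) < shrinkage T C ε := h0le.lt_of_ne (Ne.symm hne)
    obtain ⟨δ, hδ0, hδlt⟩ := EReal.exists_between_coe_real hpos
    refine ⟨δ, by exact_mod_cast hδ0, fun x hx hεx => ?_⟩
    have hle : shrinkage T C ε ≤
        ((infDist x (fixSet T) - infDist (T x) (fixSet T) : ℝ) : EReal) := by
      rw [shrinkage]
      exact iInf₂_le x ⟨hx, hεx⟩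
    exact_mod_cast (hδlt.trans_le hle).le
  -- one-step displacement bound
  have hdist : ∀ k : ℕ, dist (ω (k + 1)) (T (ω k)) ≤ β k * M := by
    intro k
    rw [hrec k, dist_eq_norm, sub_sub_cancel_left, norm_neg, norm_smul,
      Real.norm_eq_abs, abs_of_nonneg (hβpos k).le]
    exact mul_le_mul_of_nonneg_left (hfM _ (hTC _ (hmem k))) (hβpos k).le
  have hrecd : ∀ k : ℕ, infDist (ω (k + 1)) (fixSet T) ≤
      infDist (T (ω k)) (fixSet T) + β k * M := by
    intro k
    calc infDist (ω (k + 1)) (fixSet T)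
        ≤ infDist (T (ω k)) (fixSet T) + dist (ω (k + 1)) (T (ω k)) :=
          infDist_le_infDist_add_dist
      _ ≤ _ + β k * M := by linarith [hdist k]
  have hβM : Tendsto (fun k => β k * M) atTop (𝓝 (0 : ℝ)) := by
    simpa using hβ0.mul_const M
  -- STEP 1 : distance to the fixed point set tends to 0
  have hstep1 : Tendsto (fun k => infDist (ω k) (fixSet T)) atTop (𝓝 (0 : ℝ)) := by
    rw [Metric.tendsto_atTop]
    intro ε hε
    obtain ⟨δ, hδ0, hδ⟩ := hD (ε / 3) (by linarith)
    obtain ⟨δ', hδ'le, hδ'le2, hδ'0⟩ : ∃ δ', δ' ≤ δ ∧ δ' ≤ ε / 3 ∧ 0 < δ' :=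
      ⟨min δ (ε / 3), min_le_left _ _, min_le_right _ _, lt_min hδ0 (by linarith)⟩
    obtain ⟨K, hK⟩ := eventually_atTop.1 (hβM.eventually_lt_const
      (by linarith : (0:ℝ) < δ' / 2))
    have hdec : ∀ k, K ≤ k → ε / 3 ≤ infDist (ω k) (fixSet T) →
        infDist (ω (k + 1)) (fixSet T) ≤ infDist (ω k) (fixSet T) - δ' / 2 := by
      intro k hk hεk
      have h1 := hδ (ω k) (hmem k) hεk
      have h2 := hrecd k
      have h3 := hK k hk
      linarith
    have hinc : ∀ k, K ≤ k → infDist (ω (k + 1)) (fixSet T) ≤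
        infDist (ω k) (fixSet T) + δ' / 2 := by
      intro k hk
      have h1 := hrecd k
      have h2 := hdT (ω k)
      have h3 := hK k hk
      linarith
    have hex : ∃ k₀, K ≤ k₀ ∧ infDist (ω k₀) (fixSet T) < ε / 3 := by
      by_contra hcon
      push_neg at hcon
      have hiter : ∀ n : ℕ, infDist (ω (K + n)) (fixSet T) + n * (δ' / 2) ≤
          infDist (ω K) (fixSet T) := by
        intro n
        induction n with
        | zero => simp
        | succ n ih =>
          have h1 := hdec (K + n) (Nat.le_add_right K n)
            (hcon (K + n) (Nat.le_add_right K n))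
          have h2 : K + (n + 1) = (K + n) + 1 := rfl
          rw [h2]
          push_cast
          push_cast at ih
          linarith
      obtain ⟨n, hn⟩ := exists_nat_gt (infDist (ω K) (fixSet T) / (δ' / 2))
      have h5 := hiter n
      have h6 : infDist (ω K) (fixSet T) < n * (δ' / 2) := by
        rwa [div_lt_iff₀ (by linarith)] at hn
      linarith [infDist_nonneg (x := ω (K + n)) (s := fixSet T)]
    obtain ⟨k₀, hk₀K, hk₀⟩ := hex
    have hbound : ∀ k, k₀ ≤ k → infDist (ω k) (fixSet T) < ε / 3 + δ' / 2 := by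
      intro k hk
      induction k, hk using Nat.le_induction with
      | base => linarith
      | succ k hk ih =>
        by_cases hc : infDist (ω k) (fixSet T) < ε / 3
        · have := hinc k (hk₀K.trans hk)
          linarith
        · push_neg at hc
          have := hdec k (hk₀K.trans hk) hc
          linarith
    refine ⟨k₀, fun k hk => ?_⟩
    have h := hbound k hk
    rw [Real.dist_eq, sub_zero, abs_of_nonneg infDist_nonneg]
    linarith
    -- STEP 2 : distance to the solution set tends to 0
  have hΩsub : Ωs ⊆ fixSet T := by rw [hΩs]; exact fun z hz => hz.1
  have hΩcl : IsClosed Ωs := by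
    rw [hΩs]
    have hrep : {z | z ∈ fixSet T ∧ ∀ w ∈ fixSet T, 0 ≤ ⟪w - z, f' z⟫}
        = fixSet T ∩ ⋂ w ∈ fixSet T, {z | 0 ≤ ⟪w - z, f' z⟫} := by
      ext z
      simp only [Set.mem_inter_iff, Set.mem_iInter, Set.mem_setOf_eq]
    rw [hrep]
    refine hFscl.inter (isClosed_biInter fun w hw => isClosed_le continuous_const ?_)
    exact Continuous.inner (continuous_const.sub continuous_id)
      ((LipschitzWith.of_dist_le_mul (K := L.toNNReal) fun x y => by
        rw [dist_eq_norm, dist_eq_norm, Real.coe_toNNReal L hL]; exact hlip x y).continuous)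
  have hΩcpt : IsCompact Ωs := isCompact_of_isClosed_isBounded hΩcl (hfixbdd.subset hΩsub)
  obtain ⟨zst, hzst⟩ := hΩsne
  have hzstF : zst ∈ fixSet T := hΩsub hzst
  have hzstVI : ∀ w ∈ fixSet T, 0 ≤ ⟪w - zst, f' zst⟫ := by
    rw [hΩs] at hzst; exact hzst.2
  have hφmin : ∀ w ∈ fixSet T, φ zst ≤ φ w := by
    intro w hw
    have h1 := hsdm_grad_inner_le φ f' hconv hgrad zst w
    have h2 := hzstVI w hw
    rw [real_inner_comm] at h2
    linarith
  have hΩval : ∀ z ∈ Ωs, φ z ≤ φ zst := by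
    intro z hz
    rw [hΩs] at hz
    have h1 := hsdm_grad_inner_le φ f' hconv hgrad z zst
    have h2 := hz.2 zst hzstF
    rw [real_inner_comm] at h2
    linarith
  have hminΩ : ∀ x ∈ fixSet T, φ x ≤ φ zst → x ∈ Ωs := by
    intro x hxF hxv
    rw [hΩs]
    refine ⟨hxF, fun w hw => ?_⟩
    have hmin2 : ∀ w ∈ fixSet T, φ x ≤ φ w := fun w hw => hxv.trans (hφmin w hw)
    have h := hsdm_vi_of_min φ f' hgrad hFscv hxF hmin2 w hw
    rwa [real_inner_comm] at h
  have hφc : Continuous φ := by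
    rw [continuous_iff_continuousAt]
    exact fun x => (hgrad x).hasFDerivAt.continuousAt
  -- compactness lemma : points near fix T with small value are near Ωs
  have hnear : ∀ η : ℝ, 0 < η → ∃ γ : ℝ, 0 < γ ∧ ∀ u ∈ closedBall z₀ ρ,
      infDist u (fixSet T) ≤ γ → φ u ≤ φ zst + γ → infDist u Ωs ≤ η := by
    intro η hη
    by_contra hcon
    push_neg at hcon
    choose u hball hFd hφd hΩd using fun n : ℕ => hcon (1 / ((n : ℝ) + 1)) (by positivity)
    obtain ⟨x, hxball, ψ, hψ, hψlim⟩ := (isCompact_closedBall z₀ ρ).tendsto_subseq hball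
    have hlim0 : Tendsto (fun n : ℕ => 1 / ((ψ n : ℝ) + 1)) atTop (𝓝 (0 : ℝ)) :=
      tendsto_one_div_add_atTop_nhds_zero_nat.comp hψ.tendsto_atTop
    have hlimF : Tendsto (fun n => infDist (u (ψ n)) (fixSet T)) atTop
        (𝓝 (infDist x (fixSet T))) :=
      ((continuous_infDist_pt (fixSet T)).tendsto x).comp hψlim
    have hxF0 : infDist x (fixSet T) ≤ 0 :=
      le_of_tendsto_of_tendsto' hlimF hlim0 fun n => hFd (ψ n)
    have hxF : x ∈ fixSet T := (hFscl.mem_iff_infDist_zero hfixne).2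
      (le_antisymm hxF0 infDist_nonneg)
    have hlimφ : Tendsto (fun n => φ (u (ψ n))) atTop (𝓝 (φ x)) :=
      (hφc.tendsto x).comp hψlim
    have hlimφ2 : Tendsto (fun n : ℕ => φ zst + 1 / ((ψ n : ℝ) + 1)) atTop (𝓝 (φ zst)) := by
      simpa using tendsto_const_nhds.add hlim0
    have hφx : φ x ≤ φ zst :=
      le_of_tendsto_of_tendsto' hlimφ hlimφ2 fun n => hφd (ψ n)
    have hxΩ : x ∈ Ωs := hminΩ x hxF hφx
    have hlimΩ : Tendsto (fun n => infDist (u (ψ n)) Ωs) atTop (𝓝 (infDist x Ωs)) :=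
      ((continuous_infDist_pt Ωs).tendsto x).comp hψlim
    have h6 : η ≤ infDist x Ωs :=
      ge_of_tendsto hlimΩ (Eventually.of_forall fun n => (hΩd (ψ n)).le)
    rw [infDist_zero_of_mem hxΩ] at h6
    linarith
  -- key Fejér-type inequality
  have hkey : ∀ k : ℕ, ∀ z ∈ Ωs, ‖ω (k + 1) - z‖ ^ 2 ≤
      ‖ω k - z‖ ^ 2 - 2 * β k * (φ (T (ω k)) - φ zst) + (β k) ^ 2 * M ^ 2 := by
    intro k z hz
    have hgM : ‖f' (T (ω k))‖ ≤ M := hfM _ (hTC _ (hmem k))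
    have hzF : z ∈ fixSet T := hΩsub hz
    have hexp : ‖ω (k + 1) - z‖ ^ 2 = ‖T (ω k) - z‖ ^ 2
        - 2 * β k * ⟪T (ω k) - z, f' (T (ω k))⟫ + (β k) ^ 2 * ‖f' (T (ω k))‖ ^ 2 := by
      rw [hrec k]
      have harr : T (ω k) - β k • f' (T (ω k)) - z = (T (ω k) - z) - β k • f' (T (ω k)) := by
        abel
      rw [harr, norm_sub_sq_real, real_inner_smul_right, norm_smul, Real.norm_eq_abs,
        mul_pow, sq_abs]
      ring
    have hconv1 := hsdm_grad_inner_le φ f' hconv hgrad (T (ω k)) z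
    have hin : ⟪f' (T (ω k)), z - T (ω k)⟫ = - ⟪T (ω k) - z, f' (T (ω k))⟫ := by
      rw [real_inner_comm, show z - T (ω k) = -(T (ω k) - z) by abel, inner_neg_left]
    have hφz : φ z ≤ φ zst := hΩval z hz
    have hval : φ (T (ω k)) - φ zst ≤ ⟪T (ω k) - z, f' (T (ω k))⟫ := by
      rw [hin] at hconv1; linarith
    have hTz : ‖T (ω k) - z‖ ≤ ‖ω k - z‖ := hqne z hzF (ω k)
    have hTz2 : ‖T (ω k) - z‖ ^ 2 ≤ ‖ω k - z‖ ^ 2 := by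
      nlinarith [norm_nonneg (T (ω k) - z)]
    have hg2 : ‖f' (T (ω k))‖ ^ 2 ≤ M ^ 2 := by nlinarith [norm_nonneg (f' (T (ω k)))]
    have hβk := (hβpos k).le
    have t1 : 2 * β k * (φ (T (ω k)) - φ zst) ≤ 2 * β k * ⟪T (ω k) - z, f' (T (ω k))⟫ := by
      have := mul_le_mul_of_nonneg_left hval hβk
      nlinarith
    have t2 : (β k) ^ 2 * ‖f' (T (ω k))‖ ^ 2 ≤ (β k) ^ 2 * M ^ 2 :=
      mul_le_mul_of_nonneg_left hg2 (sq_nonneg _)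
    rw [hexp]
    linarith
  -- main argument
  rw [Metric.tendsto_atTop]
  intro ε hε
  obtain ⟨γ, hγ0, hγ⟩ := hnear (ε / 4) (by linarith)
  have e1 : ∀ᶠ k in atTop, β k * M ^ 2 < γ :=
    (by simpa using hβ0.mul_const (M ^ 2) : Tendsto (fun k => β k * M ^ 2) atTop
      (𝓝 (0:ℝ))).eventually_lt_const hγ0
  have e2 : ∀ᶠ k in atTop, β k * M < ε / 4 := hβM.eventually_lt_const (by linarith)
  have e3 : ∀ᶠ k in atTop, infDist (ω k) (fixSet T) < γ := hstep1.eventually_lt_const hγ0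
  obtain ⟨K, hK⟩ := eventually_atTop.1 (e1.and (e2.and e3))
  have hcase2 : ∀ k, K ≤ k → φ zst + γ < φ (T (ω k)) →
      (infDist (ω (k + 1)) Ωs) ^ 2 ≤ (infDist (ω k) Ωs) ^ 2 - γ * β k := by
    intro k hk hφu
    obtain ⟨z, hzΩ, hzd⟩ := hΩcpt.exists_infDist_eq_dist ⟨zst, hzst⟩ (ω k)
    have h1 := hkey k z hzΩ
    have h2 : infDist (ω (k + 1)) Ωs ≤ ‖ω (k + 1) - z‖ := by
      rw [← dist_eq_norm]; exact infDist_le_dist_of_mem hzΩ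
    have h3 : (infDist (ω (k + 1)) Ωs) ^ 2 ≤ ‖ω (k + 1) - z‖ ^ 2 := by
      nlinarith [infDist_nonneg (x := ω (k + 1)) (s := Ωs)]
    have h4 : ‖ω k - z‖ = infDist (ω k) Ωs := by rw [← dist_eq_norm]; exact hzd.symm
    rw [h4] at h1
    have h5 : β k * M ^ 2 < γ := (hK k hk).1
    have hβk := (hβpos k).le
    have t1 : γ * β k ≤ β k * (φ (T (ω k)) - φ zst) := by
      have := mul_le_mul_of_nonneg_left (le_of_lt (by linarith : γ < φ (T (ω k)) - φ zst)) hβk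
      nlinarith
    have t2 : (β k) ^ 2 * M ^ 2 ≤ γ * β k := by
      have h6 : β k * (β k * M ^ 2) ≤ β k * γ := mul_le_mul_of_nonneg_left h5.le hβk
      nlinarith
    linarith
  have hcase1 : ∀ k, K ≤ k → φ (T (ω k)) ≤ φ zst + γ → infDist (ω (k + 1)) Ωs ≤ ε / 2 := by
    intro k hk hφu
    have hb : T (ω k) ∈ closedBall z₀ ρ := hTC _ (hmem k)
    have hdF : infDist (T (ω k)) (fixSet T) ≤ γ := (hdT (ω k)).trans (hK k hk).2.2.le
    have h1 : infDist (T (ω k)) Ωs ≤ ε / 4 := hγ _ hb hdF hφu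
    have h2 := hdist k
    have h3 := (hK k hk).2.1
    calc infDist (ω (k + 1)) Ωs
        ≤ infDist (T (ω k)) Ωs + dist (ω (k + 1)) (T (ω k)) := infDist_le_infDist_add_dist
      _ ≤ ε / 2 := by linarith
  have hex : ∃ k₁, K ≤ k₁ ∧ φ (T (ω k₁)) ≤ φ zst + γ := by
    by_contra hcon
    push_neg at hcon
    have hiter : ∀ n : ℕ, (infDist (ω (K + n)) Ωs) ^ 2 ≤
        (infDist (ω K) Ωs) ^ 2 - γ * ∑ j ∈ Finset.range n, β (K + j) := by
      intro n
      induction n with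
      | zero => simp
      | succ n ih =>
        have h1 := hcase2 (K + n) (Nat.le_add_right _ _) (hcon _ (Nat.le_add_right _ _))
        have h2 : K + (n + 1) = (K + n) + 1 := rfl
        rw [h2, Finset.sum_range_succ, mul_add]
        linarith
    have htail : Tendsto (fun n => ∑ j ∈ Finset.range n, β (K + j)) atTop atTop := by
      have h1 : ∀ n : ℕ, ∑ j ∈ Finset.range n, β (K + j)
          = (∑ i ∈ Finset.range (K + n), β i) + -(∑ i ∈ Finset.range K, β i) := by
        intro n
        rw [Finset.sum_range_add]
        ring
      have h2 : Tendsto (fun n : ℕ => ∑ i ∈ Finset.range (K + n), β i) atTop atTop := by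
        refine hβsum.comp ?_
        exact tendsto_atTop_mono (fun n => Nat.le_add_left n K) tendsto_id
      have h3 := tendsto_atTop_add_const_right atTop (-(∑ i ∈ Finset.range K, β i)) h2
      simpa only [← h1] using h3
    obtain ⟨n, hn⟩ := (htail.eventually_gt_atTop ((infDist (ω K) Ωs) ^ 2 / γ)).exists
    have h5 := hiter n
    have h6 : (infDist (ω K) Ωs) ^ 2 < γ * ∑ j ∈ Finset.range n, β (K + j) := by
      rw [div_lt_iff₀ hγ0] at hn
      nlinarith
    nlinarith [sq_nonneg (infDist (ω (K + n)) Ωs)]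
  obtain ⟨k₁, hk₁K, hk₁⟩ := hex
  have hfin : ∀ k, k₁ + 1 ≤ k → infDist (ω k) Ωs ≤ ε / 2 := by
    intro k hk
    induction k, hk using Nat.le_induction with
    | base => exact hcase1 k₁ hk₁K hk₁
    | succ k hk ih =>
      have hkK : K ≤ k := hk₁K.trans (Nat.le_of_succ_le hk)
      by_cases hc : φ (T (ω k)) ≤ φ zst + γ
      · exact hcase1 k hkK hc
      · push_neg at hc
        have h1 := hcase2 k hkK hc
        have h2 : infDist (ω (k + 1)) Ωs ≤ infDist (ω k) Ωs := by
          have hsq : (infDist (ω (k + 1)) Ωs) ^ 2 ≤ (infDist (ω k) Ωs) ^ 2 := by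
            have := mul_nonneg hγ0.le (hβpos k).le
            linarith
          exact (pow_le_pow_iff_left₀ infDist_nonneg infDist_nonneg two_ne_zero).1 hsq
        linarith
  refine ⟨k₁ + 1, fun k hk => ?_⟩
  have h := hfin k hk
  rw [Real.dist_eq, sub_zero, abs_of_nonneg infDist_nonneg]
  linarith
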